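/- arXiv:2405.15347 — 2 statements merged into one kernel-verified Lean document; each statement's English description precedes it below -/
import Mathlib

section
/- Let p ∈ (10/3, 6), a > 0, and define for θ ∈ ℝ, r > 0: h₂(θ, r) = ((2 e^{(3(p-2)/2)θ} + 3p - 8)/(3(p-2)))·(1 - e^{-r/a})/r - e^{θ}(1 - e^{-r/(a e^{θ})})/r - (2(e^{(3(p-2)/2)θ} - 1)/(3a(p-2))) e^{-r/a}. Then h₂(0, r) = 0 for all r > 0, and h₂(θ, r) > 0 for all θ ≠ 0 and r > 0. -/
open Real

private lemma aux_w_mono {x y : ℝ} (hx : 0 < x) (hxy : x < y) :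
    (1+y) * exp (-y) < (1+x) * exp (-x) := by
  have h1 : 1 + (y - x) < exp (y - x) := by
    have := add_one_lt_exp (x := y - x) (by linarith)
    linarith
  have h2 : exp (-y) * exp (y - x) = exp (-x) := by
    rw [← exp_add]; ring_nf
  have hc : (0:ℝ) < (1+x) * exp (-y) := by positivity
  have h3 := mul_lt_mul_of_pos_left h1 hc
  have h4 : (1+x) * exp (-y) * exp (y-x) = (1+x) * exp (-x) := by
    rw [mul_assoc, h2]
  nlinarith [mul_pos (mul_pos hx (sub_pos.2 hxy)) (exp_pos (-y))]

private lemma aux_w_pos {x : ℝ} (hx : 0 < x) : 0 < 1 - (1+x) * exp (-x) := by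
  have h1 : x + 1 < exp x := add_one_lt_exp (ne_of_gt hx)
  have h2 : exp (-x) * exp x = 1 := by rw [← exp_add]; simp
  nlinarith [exp_pos x, exp_pos (-x)]

/-- For `p ∈ (10/3, 6)` and `a > 0`, the function
`h₂(θ, r) = ((2 e^{(3(p-2)/2)θ} + 3p - 8)/(3(p-2)))·(1 - e^{-r/a})/r
  - e^{θ}(1 - e^{-r/(a e^{θ})})/r - (2(e^{(3(p-2)/2)θ} - 1)/(3a(p-2))) e^{-r/a}`
vanishes at `θ = 0` for every `r > 0`, and is positive for all `θ ≠ 0`, `r > 0`. -/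
theorem h2_zero_and_pos (p a : ℝ) (hp₁ : 10/3 < p) (hp₂ : p < 6) (ha : 0 < a) :
    (∀ r : ℝ, 0 < r →
      (2 * exp (3*(p-2)/2 * 0) + 3*p - 8) / (3*(p-2)) * ((1 - exp (-r/a)) / r)
        - exp (0:ℝ) * (1 - exp (-r / (a * exp 0))) / r
        - 2 * (exp (3*(p-2)/2 * 0) - 1) / (3*a*(p-2)) * exp (-r/a) = 0) ∧
    ∀ θ : ℝ, θ ≠ 0 → ∀ r : ℝ, 0 < r →
      0 < (2 * exp (3*(p-2)/2 * θ) + 3*p - 8) / (3*(p-2)) * ((1 - exp (-r/a)) / r)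
        - exp θ * (1 - exp (-r / (a * exp θ))) / r
        - 2 * (exp (3*(p-2)/2 * θ) - 1) / (3*a*(p-2)) * exp (-r/a) := by
  have hp2 : (0:ℝ) < p - 2 := by linarith
  have h3p : (3:ℝ)*(p-2) ≠ 0 := ne_of_gt (by linarith)
  have hzero : ∀ r : ℝ, 0 < r →
      (2 * exp (3*(p-2)/2 * 0) + 3*p - 8) / (3*(p-2)) * ((1 - exp (-r/a)) / r)
        - exp (0:ℝ) * (1 - exp (-r / (a * exp 0))) / r
        - 2 * (exp (3*(p-2)/2 * 0) - 1) / (3*a*(p-2)) * exp (-r/a) = 0 := by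
    intro r hr
    simp only [mul_zero, exp_zero, mul_one, one_mul]
    field_simp
    ring
  refine ⟨hzero, ?_⟩
  intro θ hθ r hr
  have ha' : a ≠ 0 := ne_of_gt ha
  have hr' : r ≠ 0 := ne_of_gt hr
  have hk1 : (1:ℝ) < 3*(p-2)/2 := by linarith
  -- derivative computation
  have hder : ∀ t : ℝ, HasDerivAt
      (fun s : ℝ => (2 * exp (3*(p-2)/2 * s) + 3*p - 8) / (3*(p-2)) * ((1 - exp (-r/a)) / r)
        - exp s * (1 - exp (-r / (a * exp s))) / r
        - 2 * (exp (3*(p-2)/2 * s) - 1) / (3*a*(p-2)) * exp (-r/a))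
      ((exp (3*(p-2)/2 * t) * (1 - (1 + r/a) * exp (-(r/a)))
        - exp t * (1 - (1 + r/a * exp (-t)) * exp (-(r/a * exp (-t))))) / r) t := by
    intro t
    have hexp := Real.hasDerivAt_exp t
    have f1 : HasDerivAt (fun s : ℝ => 3*(p-2)/2 * s) (3*(p-2)/2 * 1) t :=
      (hasDerivAt_id t).const_mul _
    have f2 := f1.exp
    have hT1 := (((f2.const_mul 2).add_const (3*p)).sub_const 8).div_const (3*(p-2))
      |>.mul_const ((1 - exp (-r/a)) / r)
    have e1 : HasDerivAt (fun s : ℝ => a * exp s) (a * exp t) t := by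
      simpa using hexp.const_mul a
    have hne : a * exp t ≠ 0 := by positivity
    have e2 := (hasDerivAt_const t (-r)).div e1 hne
    have e3 := e2.exp
    have e4 := (hasDerivAt_const t (1:ℝ)).sub e3
    have hT2 := (hexp.mul e4).div_const r
    have hT3 := ((f2.sub_const 1).const_mul 2).div_const (3*a*(p-2))
      |>.mul_const (exp (-r/a))
    have key := (hT1.sub hT2).sub hT3
    refine key.congr_deriv ?_
    have harg : -(r/a * exp (-t)) = -r/(a*exp t) := by
      rw [exp_neg]; field_simp
    have harg2 : -(r/a) = -r/a := by ring
    rw [harg, harg2, exp_neg t]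
    simp only [Pi.sub_apply, Pi.div_apply, Pi.mul_apply]
    field_simp
    ring
  -- sign of the derivative
  have hDpos : ∀ t : ℝ, 0 < t →
      0 < (exp (3*(p-2)/2 * t) * (1 - (1 + r/a) * exp (-(r/a)))
        - exp t * (1 - (1 + r/a * exp (-t)) * exp (-(r/a * exp (-t))))) / r := by
    intro t ht
    apply div_pos _ hr
    have hX : 0 < r/a * exp (-t) := by positivity
    have hXlt : r/a * exp (-t) < r/a :=
      mul_lt_of_lt_one_right (by positivity) (exp_lt_one_iff.2 (by linarith))
    have h1 := aux_w_mono hX hXlt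
    have h2 := aux_w_pos hX
    have h3 : exp t < exp (3*(p-2)/2 * t) := exp_lt_exp.2 (by nlinarith)
    have hL := aux_w_pos (show (0:ℝ) < r/a by positivity)
    nlinarith [exp_pos t, exp_pos (3*(p-2)/2 * t),
      mul_lt_mul_of_pos_left (sub_lt_sub_left h1 1) (exp_pos t),
      mul_lt_mul_of_pos_right h3 hL]
  have hDneg : ∀ t : ℝ, t < 0 →
      (exp (3*(p-2)/2 * t) * (1 - (1 + r/a) * exp (-(r/a)))
        - exp t * (1 - (1 + r/a * exp (-t)) * exp (-(r/a * exp (-t))))) / r < 0 := by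
    intro t ht
    apply div_neg_of_neg_of_pos _ hr
    have hX : 0 < r/a * exp (-t) := by positivity
    have hXgt : r/a < r/a * exp (-t) := by
      nlinarith [one_lt_exp_iff.2 (show 0 < -t by linarith), div_pos hr ha]
    have h1 := aux_w_mono (show (0:ℝ) < r/a by positivity) hXgt
    have hL := aux_w_pos (show (0:ℝ) < r/a by positivity)
    have h2 := aux_w_pos hX
    have h3 : exp (3*(p-2)/2 * t) < exp t := exp_lt_exp.2 (by nlinarith)
    nlinarith [exp_pos t, exp_pos (3*(p-2)/2 * t),
      mul_lt_mul_of_pos_left (sub_lt_sub_left h1 1) (exp_pos (3*(p-2)/2 * t)),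
      mul_lt_mul_of_pos_right h3 h2]
  have hH0 : (fun s : ℝ => (2 * exp (3*(p-2)/2 * s) + 3*p - 8) / (3*(p-2)) * ((1 - exp (-r/a)) / r)
        - exp s * (1 - exp (-r / (a * exp s))) / r
        - 2 * (exp (3*(p-2)/2 * s) - 1) / (3*a*(p-2)) * exp (-r/a)) 0 = 0 := hzero r hr
  rcases lt_or_gt_of_ne hθ with h | h
  · have hanti : StrictAntiOn
        (fun s : ℝ => (2 * exp (3*(p-2)/2 * s) + 3*p - 8) / (3*(p-2)) * ((1 - exp (-r/a)) / r)
          - exp s * (1 - exp (-r / (a * exp s))) / r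
          - 2 * (exp (3*(p-2)/2 * s) - 1) / (3*a*(p-2)) * exp (-r/a)) (Set.Iic 0) := by
      apply strictAntiOn_of_deriv_neg (convex_Iic 0)
      · exact fun x _ => (hder x).differentiableAt.continuousAt.continuousWithinAt
      · intro x hx
        rw [interior_Iic] at hx
        rw [(hder x).deriv]
        exact hDneg x hx
    have := hanti (Set.mem_Iic.2 h.le) (Set.mem_Iic.2 le_rfl) h
    rw [hH0] at this
    exact this
  · have hmono : StrictMonoOn
        (fun s : ℝ => (2 * exp (3*(p-2)/2 * s) + 3*p - 8) / (3*(p-2)) * ((1 - exp (-r/a)) / r)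
          - exp s * (1 - exp (-r / (a * exp s))) / r
          - 2 * (exp (3*(p-2)/2 * s) - 1) / (3*a*(p-2)) * exp (-r/a)) (Set.Ici 0) := by
      apply strictMonoOn_of_deriv_pos (convex_Ici 0)
      · exact fun x _ => (hder x).differentiableAt.continuousAt.continuousWithinAt
      · intro x hx
        rw [interior_Ici] at hx
        rw [(hder x).deriv]
        exact hDpos x hx
    have := hmono (Set.mem_Ici.2 le_rfl) (Set.mem_Ici.2 h.le) h
    rw [hH0] at this
    exact this
end

section
/- Let p ∈ (10/3, 6), a > 0. For all u ∈ H¹(ℝ³) and θ ∈ ℝ, E(u) ≥ E(κ(u, θ)) + (2(1 - e^{3(p-2)θ/2})/(3(p-2))) P(u) + (h₁(θ)/(6(p-2))) ‖∇u‖²_{L²}, where h₁(θ) = 4 e^{3(p-2)θ/2} - 3(p-2) e^{2θ} + 3p - 10, κ(u,θ)(x) = e^{3θ/2} u(e^{θ}x), and E, P are the energy and Pohozaev functionals of the Schrödinger–Bopp–Podolsky equation. -/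
open MeasureTheory Real Filter Set

noncomputable section

abbrev Ω3 := EuclideanSpace ℝ (Fin 3)

/-- The squared L² norm of the gradient. -/
def gradSq (u : Ω3 → ℝ) : ℝ := ∫ x, ‖fderiv ℝ u x‖ ^ 2

/-- A double (nonlocal) integral with kernel `K` of the distance. -/
def dblInt (K : ℝ → ℝ) (u : Ω3 → ℝ) : ℝ :=
  ∫ x, ∫ y, K (‖x - y‖) * (u x) ^ 2 * (u y) ^ 2

/-- The Bopp–Podolsky kernel `(1 - e^{-r/a})/r`. -/
def Kbp (a r : ℝ) : ℝ := (1 - exp (-r / a)) / r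

/-- `∫ |u|^p`. -/
def lpInt (u : Ω3 → ℝ) (p : ℝ) : ℝ := ∫ x, |u x| ^ p

/-- The Schrödinger–Bopp–Podolsky energy functional. -/
def Ebp (a p : ℝ) (u : Ω3 → ℝ) : ℝ :=
  (1/2) * gradSq u + (1/4) * dblInt (Kbp a) u - (1/p) * lpInt u p

/-- The Pohozaev functional. -/
def Pbp (a p : ℝ) (u : Ω3 → ℝ) : ℝ :=
  gradSq u + (1/4) * dblInt (Kbp a) u
    - (1/(4*a)) * dblInt (fun r => exp (-r / a)) u
    - (3*(p-2)/(2*p)) * lpInt u p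

/-- The L²-norm preserving dilation `κ(u,θ)(x) = e^{3θ/2} u(e^{θ} x)`. -/
def scl (θ : ℝ) (u : Ω3 → ℝ) : Ω3 → ℝ := fun x => exp (3*θ/2) * u (exp θ • x)

/-- Membership in `H¹(ℝ³)`. -/
def H1 (u : Ω3 → ℝ) : Prop :=
  MemLp u 2 volume ∧ MemLp (fun x => ‖fderiv ℝ u x‖) 2 volume

section aux

noncomputable section



lemma exp_pow_cancel (s t : ℝ) (h : s + t = 0) : exp s * exp t = 1 := by
  rw [← exp_add, h, exp_zero]

lemma comp_smul_eq (θ : ℝ) (u : Ω3 → ℝ) :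
    u = fun y => exp (-(3*θ/2)) * scl θ u (exp (-θ) • y) := by
  funext y
  simp only [scl, smul_smul, ← exp_add]
  rw [← mul_assoc, exp_pow_cancel _ _ (by ring)]
  norm_num

lemma fderiv_scl_norm (θ : ℝ) (u : Ω3 → ℝ) (x : Ω3) :
    ‖fderiv ℝ (scl θ u) x‖ = exp (5*θ/2) * ‖fderiv ℝ u (exp θ • x)‖ := by
  set c := exp θ with hc
  set k := exp (3*θ/2) with hk
  by_cases hd : DifferentiableAt ℝ u (c • x)
  · have hin : HasFDerivAt (fun x : Ω3 => c • x)
        ((c : ℝ) • (ContinuousLinearMap.id ℝ Ω3)) x := by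
      exact ((c : ℝ) • (ContinuousLinearMap.id ℝ Ω3)).hasFDerivAt
    have hcomp : HasFDerivAt (fun x : Ω3 => u (c • x))
        ((fderiv ℝ u (c • x)).comp ((c : ℝ) • (ContinuousLinearMap.id ℝ Ω3))) x :=
      hd.hasFDerivAt.comp x hin
    have hmul : HasFDerivAt (scl θ u)
        (k • ((fderiv ℝ u (c • x)).comp ((c : ℝ) • (ContinuousLinearMap.id ℝ Ω3)))) x := by
      show HasFDerivAt (fun y => k * u (c • y)) _ x
      simpa [smul_eq_mul] using hcomp.const_mul k
    rw [hmul.fderiv]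
    have hcompeq : (fderiv ℝ u (c • x)).comp ((c : ℝ) • (ContinuousLinearMap.id ℝ Ω3))
        = c • fderiv ℝ u (c • x) := by
      ext v
      simp
    rw [hcompeq, smul_smul, norm_smul]
    rw [show ‖k * c‖ = exp (5*θ/2) by
      rw [norm_mul, norm_eq_abs, norm_eq_abs, hk, hc, abs_exp, abs_exp, ← exp_add]
      congr 1
      ring]
  · have heq : (exp (-θ) : ℝ) • (c • x) = x := by
      rw [smul_smul, hc, ← exp_add]
      norm_num
    have hd2 : ¬ DifferentiableAt ℝ (scl θ u) x := by
      intro h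
      apply hd
      have hin' : DifferentiableAt ℝ (fun y : Ω3 => (exp (-θ) : ℝ) • y) (c • x) :=
        ((exp (-θ) : ℝ) • (ContinuousLinearMap.id ℝ Ω3)).differentiableAt
      have h' : DifferentiableAt ℝ (scl θ u) ((exp (-θ) : ℝ) • (c • x)) := by
        rw [heq]; exact h
      have h6 := (h'.comp (c • x) hin').const_mul (exp (-(3*θ/2)))
      have heq2 : (fun y : Ω3 => exp (-(3*θ/2)) * ((scl θ u) ∘ (fun y : Ω3 => (exp (-θ) : ℝ) • y)) y)
          = u := by
        simp only [Function.comp]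
        exact (comp_smul_eq θ u).symm
      rw [heq2] at h6
      exact h6
    rw [fderiv_zero_of_not_differentiableAt hd, fderiv_zero_of_not_differentiableAt hd2]
    simp

lemma gradSq_scl (θ : ℝ) (u : Ω3 → ℝ) : gradSq (scl θ u) = exp (2*θ) * gradSq u := by
  unfold gradSq
  have h1 : ∀ x : Ω3, ‖fderiv ℝ (scl θ u) x‖ ^ 2
      = exp (5*θ) * ((fun y => ‖fderiv ℝ u y‖ ^ 2) (exp θ • x)) := by
    intro x
    rw [fderiv_scl_norm, mul_pow,
      show exp (5*θ/2) ^ 2 = exp (5*θ) by rw [sq, ← exp_add]; congr 1; ring]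
  simp_rw [h1]
  rw [integral_const_mul]
  rw [MeasureTheory.Measure.integral_comp_smul volume (fun y => ‖fderiv ℝ u y‖ ^ 2) (exp θ)]
  rw [finrank_euclideanSpace_fin]
  rw [abs_of_nonneg (by positivity), smul_eq_mul, ← mul_assoc]
  congr 1
  rw [show ((exp θ) ^ 3)⁻¹ = exp (-(3*θ)) by
    rw [pow_succ, pow_succ, pow_one, ← exp_add, ← exp_add, ← exp_neg]; congr 1; ring]
  rw [← exp_add]
  congr 1
  ring



lemma lpInt_scl (θ p : ℝ) (u : Ω3 → ℝ) :
    lpInt (scl θ u) p = exp (3*(p-2)*θ/2) * lpInt u p := by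
  unfold lpInt scl
  have h1 : ∀ x : Ω3, |exp (3*θ/2) * u (exp θ • x)| ^ p
      = exp (3*θ/2*p) * ((fun y => |u y| ^ p) (exp θ • x)) := by
    intro x
    rw [abs_mul, Real.mul_rpow (abs_nonneg _) (abs_nonneg _), abs_exp, ← Real.exp_mul]
  simp_rw [h1]
  rw [integral_const_mul,
    MeasureTheory.Measure.integral_comp_smul volume (fun y => |u y| ^ p) (exp θ),
    finrank_euclideanSpace_fin, abs_of_nonneg (by positivity), smul_eq_mul, ← mul_assoc]
  congr 1
  rw [show ((exp θ) ^ 3)⁻¹ = exp (-(3*θ)) by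
    rw [pow_succ, pow_succ, pow_one, ← exp_add, ← exp_add, ← exp_neg]; congr 1; ring,
    ← exp_add]
  congr 1
  ring

lemma dblInt_scl (K : ℝ → ℝ) (θ : ℝ) (u : Ω3 → ℝ) :
    dblInt K (scl θ u) = dblInt (fun r => K (exp (-θ) * r)) u := by
  unfold dblInt scl
  set c := exp θ with hc
  have hc3 : |((c ^ 3)⁻¹ : ℝ)| = exp (-(3*θ)) := by
    rw [abs_of_nonneg (by positivity), hc, pow_succ, pow_succ, pow_one,
      ← exp_add, ← exp_add, ← exp_neg]
    congr 1
    ring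
  set J : Ω3 → ℝ := fun w => ∫ z, K (exp (-θ) * ‖w - z‖) * u z ^ 2 with hJ
  have hinner : ∀ x : Ω3,
      (∫ y, K ‖x - y‖ * (exp (3*θ/2) * u (c • x)) ^ 2 * (exp (3*θ/2) * u (c • y)) ^ 2)
      = (fun w => exp (3*θ) * (u w ^ 2 * J w)) (c • x) := by
    intro x
    have e1 : ∀ y : Ω3, K ‖x - y‖ * (exp (3*θ/2) * u (c • x)) ^ 2 * (exp (3*θ/2) * u (c • y)) ^ 2
        = (exp (6*θ) * u (c • x) ^ 2) * (K ‖x - y‖ * u (c • y) ^ 2) := by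
      intro y
      rw [show exp (6*θ) = exp (3*θ/2) ^ 2 * exp (3*θ/2) ^ 2 by
        simp only [sq, ← exp_add]; congr 1; ring]
      ring
    simp_rw [e1]
    rw [integral_const_mul]
    have e2 : ∀ y : Ω3, K ‖x - y‖ * u (c • y) ^ 2
        = (fun z => K (exp (-θ) * ‖c • x - z‖) * u z ^ 2) (c • y) := by
      intro y
      simp only
      congr 2
      rw [show c • x - c • y = c • (x - y) by rw [smul_sub], norm_smul,
        Real.norm_eq_abs, hc, abs_exp, ← mul_assoc, exp_pow_cancel _ _ (by ring), one_mul]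
    simp_rw [e2]
    rw [MeasureTheory.Measure.integral_comp_smul volume
      (fun z => K (exp (-θ) * ‖c • x - z‖) * u z ^ 2) c, finrank_euclideanSpace_fin, hc3,
      smul_eq_mul]
    simp only [hJ]
    have hee : exp (6*θ) * exp (-(3*θ)) = exp (3*θ) := by rw [← exp_add]; congr 1; ring
    rw [← hee]
    ring
  simp_rw [hinner]
  rw [MeasureTheory.Measure.integral_comp_smul volume (fun w => exp (3*θ) * (u w ^ 2 * J w)) c,
    finrank_euclideanSpace_fin, hc3, smul_eq_mul, integral_const_mul, ← mul_assoc,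
    exp_pow_cancel _ _ (by ring), one_mul]
  have hsw : ∀ w : Ω3, (∫ z, K (exp (-θ) * ‖w - z‖) * u w ^ 2 * u z ^ 2) = u w ^ 2 * J w := by
    intro w
    simp only [hJ]
    rw [← integral_const_mul]
    congr 1
    funext z
    ring
  simp_rw [hsw]

section dbl

variable {u : Ω3 → ℝ} {K : ℝ → ℝ} {C : ℝ}

lemma C_nonneg (hb : ∀ r, 0 ≤ r → |K r| ≤ C) : 0 ≤ C := (abs_nonneg _).trans (hb 0 le_rfl)

lemma inner_integrable (hu2 : Integrable (fun x => u x ^ 2)) (hK : Measurable K)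
    (hb : ∀ r, 0 ≤ r → |K r| ≤ C) (x : Ω3) :
    Integrable (fun y => K ‖x - y‖ * u x ^ 2 * u y ^ 2) := by
  have : (fun y : Ω3 => K ‖x - y‖ * u x ^ 2 * u y ^ 2)
      = fun y => (K ‖x - y‖ * u x ^ 2) * u y ^ 2 := by funext y; ring
  rw [this]
  apply hu2.bdd_mul (c := C * u x ^ 2)
  · exact ((hK.comp ((continuous_const.sub continuous_id).norm.measurable)).aestronglyMeasurable).mul
      aestronglyMeasurable_const
  · refine ae_of_all _ (fun y => ?_)
    rw [norm_mul, Real.norm_eq_abs, Real.norm_eq_abs, abs_pow, sq_abs]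
    exact mul_le_mul_of_nonneg_right (hb _ (norm_nonneg _)) (sq_nonneg _)

lemma prod_aesm (hu : AEStronglyMeasurable u (volume : Measure Ω3)) (hK : Measurable K) :
    AEStronglyMeasurable (fun q : Ω3 × Ω3 => K ‖q.1 - q.2‖ * u q.1 ^ 2 * u q.2 ^ 2)
      ((volume : Measure Ω3).prod volume) := by
  apply AEStronglyMeasurable.mul
  apply AEStronglyMeasurable.mul
  · exact (hK.comp ((continuous_fst.sub continuous_snd).norm.measurable)).aestronglyMeasurable
  · exact (hu.comp_fst).pow 2
  · exact (hu.comp_snd).pow 2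

lemma inner_aesm (hu : AEStronglyMeasurable u (volume : Measure Ω3)) (hK : Measurable K) :
    AEStronglyMeasurable (fun x : Ω3 => ∫ y, K ‖x - y‖ * u x ^ 2 * u y ^ 2)
      (volume : Measure Ω3) :=
  (prod_aesm hu hK).integral_prod_right'

lemma inner_bound (hu2 : Integrable (fun x => u x ^ 2)) (hK : Measurable K)
    (hb : ∀ r, 0 ≤ r → |K r| ≤ C) (x : Ω3) :
    |∫ y, K ‖x - y‖ * u x ^ 2 * u y ^ 2| ≤ (C * ∫ y, u y ^ 2) * u x ^ 2 := by
  calc |∫ y, K ‖x - y‖ * u x ^ 2 * u y ^ 2| ≤ ∫ y, |K ‖x - y‖ * u x ^ 2 * u y ^ 2| := by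
        simpa only [Real.norm_eq_abs] using
          norm_integral_le_integral_norm (fun y : Ω3 => K ‖x - y‖ * u x ^ 2 * u y ^ 2)
    _ ≤ ∫ y, (C * u x ^ 2) * u y ^ 2 := by
        apply integral_mono (inner_integrable hu2 hK hb x).abs (hu2.const_mul _)
        intro y
        simp only [abs_mul, abs_pow, sq_abs]
        have := mul_le_mul_of_nonneg_right (hb _ (norm_nonneg (x - y))) (sq_nonneg (u x))
        exact mul_le_mul_of_nonneg_right this (sq_nonneg (u y))
    _ = (C * ∫ y, u y ^ 2) * u x ^ 2 := by rw [integral_const_mul]; ring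

lemma outer_integrable (hu : AEStronglyMeasurable u (volume : Measure Ω3))
    (hu2 : Integrable (fun x => u x ^ 2)) (hK : Measurable K)
    (hb : ∀ r, 0 ≤ r → |K r| ≤ C) :
    Integrable (fun x : Ω3 => ∫ y, K ‖x - y‖ * u x ^ 2 * u y ^ 2) := by
  apply Integrable.mono' (hu2.const_mul (C * ∫ y, u y ^ 2)) (inner_aesm hu hK)
  refine ae_of_all _ fun x => ?_
  rw [Real.norm_eq_abs]
  exact inner_bound hu2 hK hb x

end dbl

lemma dblInt_mono {u : Ω3 → ℝ} {K₁ K₂ : ℝ → ℝ} {C : ℝ}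
    (hu : AEStronglyMeasurable u (volume : Measure Ω3))
    (hu2 : Integrable (fun x => u x ^ 2))
    (hK₁ : Measurable K₁) (hK₂ : Measurable K₂)
    (hb₁ : ∀ r, 0 ≤ r → |K₁ r| ≤ C) (hb₂ : ∀ r, 0 ≤ r → |K₂ r| ≤ C)
    (hle : ∀ r, 0 < r → K₁ r ≤ K₂ r) :
    dblInt K₁ u ≤ dblInt K₂ u := by
  unfold dblInt
  apply integral_mono (outer_integrable hu hu2 hK₁ hb₁) (outer_integrable hu hu2 hK₂ hb₂)
  intro x
  apply integral_mono_ae (inner_integrable hu2 hK₁ hb₁ x) (inner_integrable hu2 hK₂ hb₂ x)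
  have hae : ∀ᵐ (y : Ω3), y ≠ x := by
    rw [ae_iff]
    have h0 : {y : Ω3 | ¬ y ≠ x} = {x} := by ext y; simp
    rw [h0]
    exact measure_singleton x
  filter_upwards [hae] with y hy
  have hr : 0 < ‖x - y‖ := by
    rw [norm_pos_iff, sub_ne_zero]
    exact fun h => hy h.symm
  exact mul_le_mul_of_nonneg_right
    (mul_le_mul_of_nonneg_right (hle _ hr) (sq_nonneg _)) (sq_nonneg _)

lemma dblInt_add {u : Ω3 → ℝ} {K₁ K₂ : ℝ → ℝ} {C₁ C₂ : ℝ}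
    (hu : AEStronglyMeasurable u (volume : Measure Ω3))
    (hu2 : Integrable (fun x => u x ^ 2))
    (hK₁ : Measurable K₁) (hK₂ : Measurable K₂)
    (hb₁ : ∀ r, 0 ≤ r → |K₁ r| ≤ C₁) (hb₂ : ∀ r, 0 ≤ r → |K₂ r| ≤ C₂) :
    dblInt (fun r => K₁ r + K₂ r) u = dblInt K₁ u + dblInt K₂ u := by
  unfold dblInt
  have h1 : ∀ x y : Ω3, (K₁ ‖x - y‖ + K₂ ‖x - y‖) * u x ^ 2 * u y ^ 2
      = K₁ ‖x - y‖ * u x ^ 2 * u y ^ 2 + K₂ ‖x - y‖ * u x ^ 2 * u y ^ 2 := by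
    intro x y; ring
  simp_rw [h1]
  have h2 : ∀ x : Ω3, (∫ y, (K₁ ‖x - y‖ * u x ^ 2 * u y ^ 2 + K₂ ‖x - y‖ * u x ^ 2 * u y ^ 2))
      = (∫ y, K₁ ‖x - y‖ * u x ^ 2 * u y ^ 2) + ∫ y, K₂ ‖x - y‖ * u x ^ 2 * u y ^ 2 := by
    intro x
    exact integral_add (inner_integrable hu2 hK₁ hb₁ x) (inner_integrable hu2 hK₂ hb₂ x)
  simp_rw [h2]
  exact integral_add (outer_integrable hu hu2 hK₁ hb₁) (outer_integrable hu hu2 hK₂ hb₂)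

lemma dblInt_const_mul (c : ℝ) (K : ℝ → ℝ) (u : Ω3 → ℝ) :
    dblInt (fun r => c * K r) u = c * dblInt K u := by
  unfold dblInt
  have h1 : ∀ x y : Ω3, (c * K ‖x - y‖) * u x ^ 2 * u y ^ 2
      = c * (K ‖x - y‖ * u x ^ 2 * u y ^ 2) := by intro x y; ring
  simp_rw [h1, integral_const_mul]


lemma Kbp_measurable (a : ℝ) : Measurable (Kbp a) :=
  (measurable_const.sub ((measurable_id.neg.div_const a).exp)).div measurable_id

lemma Kbp_bound {a : ℝ} (ha : 0 < a) {r : ℝ} (hr : 0 ≤ r) : |Kbp a r| ≤ a⁻¹ := by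
  unfold Kbp
  rcases eq_or_lt_of_le hr with h | h
  · rw [← h]
    simp
    positivity
  · have h1 : exp (-r/a) ≤ 1 := by
      rw [show (1:ℝ) = exp 0 by rw [exp_zero]]
      apply exp_le_exp.mpr
      rw [neg_div]
      simp only [Left.neg_nonpos_iff]
      positivity
    have h2 : 1 + (-r/a) ≤ exp (-r/a) := by
      have := Real.add_one_le_exp (-r/a)
      linarith
    rw [abs_of_nonneg (div_nonneg (by linarith) h.le)]
    rw [div_le_iff₀ h]
    have hd : -r / a = -(r * a⁻¹) := by ring
    rw [hd] at h2 ⊢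
    linarith

lemma exp_kernel_bound {a : ℝ} (ha : 0 < a) {r : ℝ} (hr : 0 ≤ r) : |exp (-r/a)| ≤ 1 := by
  rw [abs_exp]
  rw [show (1:ℝ) = exp 0 by rw [exp_zero]]
  apply exp_le_exp.mpr
  rw [neg_div]
  simp only [Left.neg_nonpos_iff]
  positivity

/-- `m y = 1 - e^{-y}(1+y)`, nonneg and monotone on `[0,∞)`. -/
private def mfun (y : ℝ) : ℝ := 1 - exp (-y) * (1 + y)

private lemma gfun_hasDeriv (y : ℝ) :
    HasDerivAt (fun y => exp (-y) * (1 + y)) (-(y * exp (-y))) y := by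
  have h1 : HasDerivAt (fun y : ℝ => exp (-y)) (-exp (-y)) y := by
    simpa using ((hasDerivAt_id y).neg.exp)
  have h2 : HasDerivAt (fun y : ℝ => 1 + y) 1 y := by
    simpa using (hasDerivAt_id y).const_add 1
  have := h1.mul h2
  refine this.congr_deriv ?_
  ring

private lemma gfun_anti : AntitoneOn (fun y : ℝ => exp (-y) * (1 + y)) (Ici 0) := by
  apply antitoneOn_of_deriv_nonpos (convex_Ici 0)
  · exact (continuous_neg.rexp.mul (continuous_const.add continuous_id)).continuousOn
  · intro y _
    exact (gfun_hasDeriv y).differentiableAt.differentiableWithinAt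
  · intro y hy
    rw [interior_Ici] at hy
    rw [(gfun_hasDeriv y).deriv]
    have hy' : 0 < y := hy
    nlinarith [exp_pos (-y)]

private lemma mfun_nonneg {y : ℝ} (hy : 0 ≤ y) : 0 ≤ mfun y := by
  have := gfun_anti (mem_Ici.2 le_rfl) (mem_Ici.2 hy) hy
  simp only [neg_zero, exp_zero, add_zero, one_mul] at this
  unfold mfun; linarith

private lemma mfun_mono {y z : ℝ} (hy : 0 ≤ y) (hz : y ≤ z) : mfun y ≤ mfun z := by
  have := gfun_anti (mem_Ici.2 hy) (mem_Ici.2 (hy.trans hz)) hz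
  simp only at this
  unfold mfun; linarith

end

noncomputable section
private def qfun (y : ℝ) : ℝ := mfun y / y ^ 2

private lemma qfun_nonneg {y : ℝ} (hy : 0 ≤ y) : 0 ≤ qfun y :=
  div_nonneg (mfun_nonneg hy) (by positivity)

private lemma phi_hasDeriv {x : ℝ} (hx : 0 < x) {σ : ℝ} (hσ : 0 < σ) :
    HasDerivAt (fun σ : ℝ => (1 - exp (-(σ * x))) / (σ * x)) (-(x * qfun (σ * x))) σ := by
  have hnum : HasDerivAt (fun σ : ℝ => 1 - exp (-(σ * x))) (x * exp (-(σ * x))) σ := by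
    have : HasDerivAt (fun σ : ℝ => -(σ * x)) (-x) σ := by
      exact (((hasDerivAt_id' σ).mul_const x).neg).congr_deriv (by ring)
    simpa [neg_mul, mul_comm] using (this.exp.const_sub 1)
  have hden : HasDerivAt (fun σ : ℝ => σ * x) x σ := by
    simpa using (hasDerivAt_id σ).mul_const x
  have hd : σ * x ≠ 0 := by positivity
  have := hnum.div hden hd
  refine this.congr_deriv ?_
  unfold qfun mfun
  field_simp
  ring

private lemma rpow_hasDeriv {μ : ℝ} (hμ : μ ≠ 0) {σ : ℝ} (hσ : 0 < σ) :
    HasDerivAt (fun σ : ℝ => (σ ^ (-μ) - 1) / μ) (-(σ ^ (-μ - 1))) σ := by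
  have h := Real.hasDerivAt_rpow_const (x := σ) (p := -μ) (Or.inl hσ.ne')
  have := (h.sub_const 1).div_const μ
  refine this.congr_deriv ?_
  field_simp

/-- The scale-comparison function. -/
private def Ffun (μ x : ℝ) : ℝ → ℝ := fun σ =>
  ((σ ^ (-μ) - 1) / μ) * (x * qfun x) - (1 - exp (-(σ * x))) / (σ * x) + (1 - exp (-x)) / x

private lemma Ffun_hasDeriv {μ : ℝ} (hμ : μ ≠ 0) {x σ : ℝ} (hx : 0 < x) (hσ : 0 < σ) :
    HasDerivAt (Ffun μ x) (x * (qfun (σ * x) - σ ^ (-μ - 1) * qfun x)) σ := by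
  have h1 := ((rpow_hasDeriv hμ hσ).mul_const (x * qfun x)).sub (phi_hasDeriv hx hσ)
  have := h1.add_const ((1 - exp (-x)) / x)
  refine this.congr_deriv ?_
  ring

end

noncomputable section

private lemma rpow_split {μ σ : ℝ} (hσ : 0 < σ) : σ ^ (-μ - 1) = σ ^ (1 - μ) / σ ^ 2 := by
  rw [show -μ - 1 = (1 - μ) - (2:ℕ) by push_cast; ring, Real.rpow_sub hσ, Real.rpow_natCast]

private lemma qfun_compare_le {μ x σ : ℝ} (hμ : 1 ≤ μ) (hx : 0 < x) (hσ : 0 < σ)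
    (hσ1 : σ ≤ 1) : qfun (σ * x) ≤ σ ^ (-μ - 1) * qfun x := by
  have h1 : mfun (σ * x) ≤ mfun x := mfun_mono (by positivity) (by nlinarith)
  have h2 : (1:ℝ) ≤ σ ^ (1 - μ) :=
    Real.one_le_rpow_of_pos_of_le_one_of_nonpos hσ hσ1 (by linarith)
  have key : mfun (σ * x) ≤ σ ^ (1 - μ) * mfun x := by
    nlinarith [mfun_nonneg (le_of_lt hx)]
  have heq : σ ^ (-μ - 1) * qfun x = (σ ^ (1 - μ) * mfun x) / ((σ * x) ^ 2) := by
    rw [rpow_split hσ]; unfold qfun; rw [mul_pow]; field_simp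
  rw [heq]
  unfold qfun
  gcongr

private lemma qfun_compare_ge {μ x σ : ℝ} (hμ : 1 ≤ μ) (hx : 0 < x) (hσ : 0 < σ)
    (hσ1 : 1 ≤ σ) : σ ^ (-μ - 1) * qfun x ≤ qfun (σ * x) := by
  have h1 : mfun x ≤ mfun (σ * x) := mfun_mono (le_of_lt hx) (by nlinarith)
  have h2 : σ ^ (1 - μ) ≤ 1 :=
    Real.rpow_le_one_of_one_le_of_nonpos hσ1 (by linarith)
  have key : σ ^ (1 - μ) * mfun x ≤ mfun (σ * x) := by
    have h3 : 0 ≤ mfun x := mfun_nonneg (le_of_lt hx)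
    nlinarith
  have heq : σ ^ (-μ - 1) * qfun x = (σ ^ (1 - μ) * mfun x) / ((σ * x) ^ 2) := by
    rw [rpow_split hσ]; unfold qfun; rw [mul_pow]; field_simp
  rw [heq]
  unfold qfun
  gcongr

private lemma Ffun_nonneg {μ x σ : ℝ} (hμ : 1 ≤ μ) (hx : 0 < x) (hσ : 0 < σ) :
    0 ≤ Ffun μ x σ := by
  have hμ0 : μ ≠ 0 := by linarith
  have hF1 : Ffun μ x 1 = 0 := by
    unfold Ffun
    rw [Real.one_rpow]
    simp
  rcases le_total σ 1 with hle | hge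
  · have hanti : AntitoneOn (Ffun μ x) (Icc σ 1) := by
      apply antitoneOn_of_deriv_nonpos (convex_Icc σ 1)
      · intro t ht
        exact (Ffun_hasDeriv hμ0 hx (lt_of_lt_of_le hσ ht.1)).continuousAt.continuousWithinAt
      · intro t ht
        rw [interior_Icc] at ht
        exact (Ffun_hasDeriv hμ0 hx (lt_of_lt_of_le hσ ht.1.le)).differentiableAt.differentiableWithinAt
      · intro t ht
        rw [interior_Icc] at ht
        have htpos : 0 < t := lt_of_lt_of_le hσ ht.1.le
        rw [(Ffun_hasDeriv hμ0 hx htpos).deriv]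
        have := qfun_compare_le hμ hx htpos ht.2.le
        nlinarith
    have := hanti (mem_Icc.2 ⟨le_rfl, hle⟩) (mem_Icc.2 ⟨hle, le_rfl⟩) hle
    rw [hF1] at this
    exact this
  · have hmono : MonotoneOn (Ffun μ x) (Icc 1 σ) := by
      apply monotoneOn_of_deriv_nonneg (convex_Icc 1 σ)
      · intro t ht
        exact (Ffun_hasDeriv hμ0 hx (lt_of_lt_of_le one_pos ht.1)).continuousAt.continuousWithinAt
      · intro t ht
        rw [interior_Icc] at ht
        exact (Ffun_hasDeriv hμ0 hx (lt_of_lt_of_le one_pos ht.1.le)).differentiableAt.differentiableWithinAt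
      · intro t ht
        rw [interior_Icc] at ht
        have htpos : 0 < t := lt_of_lt_of_le one_pos ht.1.le
        rw [(Ffun_hasDeriv hμ0 hx htpos).deriv]
        have := qfun_compare_ge hμ hx htpos ht.1.le
        nlinarith
    have := hmono (mem_Icc.2 ⟨le_rfl, hge⟩) (mem_Icc.2 ⟨hge, le_rfl⟩) hge
    rw [hF1] at this
    exact this

/-- The key pointwise inequality. -/
private lemma kernel_pt {μ x σ : ℝ} (hμ : 1 ≤ μ) (hx : 0 < x) (hσ : 0 < σ) :
    (1 - exp (-(σ * x))) / (σ * x) - (1 - exp (-x)) / x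
      ≤ ((σ ^ (-μ) - 1) / μ) * ((1 - exp (-x)) / x - exp (-x)) := by
  have h := Ffun_nonneg hμ hx hσ
  unfold Ffun at h
  have hq : x * qfun x = (1 - exp (-x)) / x - exp (-x) := by
    unfold qfun mfun
    field_simp
    ring
  rw [hq] at h
  linarith

end

section kernelineq

lemma kernel_ineq {a θ r μ : ℝ} (ha : 0 < a) (hμ : 1 ≤ μ) (hr : 0 < r) :
    exp θ * Kbp (a * exp θ) r + ((1 - exp (μ*θ))/μ) * (Kbp a r - exp (-r/a) / a)
      ≤ Kbp a r := by
  have hx : 0 < r / a := by positivity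
  have hσ : 0 < exp (-θ) := exp_pos _
  have h := kernel_pt hμ hx hσ
  have hane : a ≠ 0 := ha.ne'
  have hrne : r ≠ 0 := hr.ne'
  have hexpne : exp θ ≠ 0 := (exp_pos θ).ne'
  have e1 : (1 - exp (-(exp (-θ) * (r/a)))) / (exp (-θ) * (r/a))
      = a * (exp θ * Kbp (a * exp θ) r) := by
    unfold Kbp
    rw [show -(exp (-θ) * (r/a)) = -r / (a * exp θ) by rw [exp_neg]; field_simp,
      show exp (-θ) * (r/a) = r / (a * exp θ) by rw [exp_neg]; field_simp]
    rw [div_div_eq_mul_div]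
    field_simp
  have e2 : (1 - exp (-(r/a))) / (r/a) = a * Kbp a r := by
    unfold Kbp
    rw [show -(r/a) = -r/a by ring]
    rw [div_div_eq_mul_div]
    field_simp
  have e3 : exp (-(r/a)) = a * (exp (-r/a) / a) := by
    rw [show -(r/a) = -r/a by ring]
    field_simp
  have e4 : (exp (-θ)) ^ (-μ) = exp (μ*θ) := by
    rw [← Real.exp_mul]
    congr 1
    ring
  rw [e1, e2, e3, e4] at h
  rw [show (1 - exp (μ*θ))/μ = -((exp (μ*θ) - 1)/μ) by ring]
  set d := (exp (μ*θ) - 1)/μ with hd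
  set A := exp θ * Kbp (a * exp θ) r with hA
  set B := Kbp a r with hB
  set E := exp (-r/a) / a with hE
  have h2 : a * (A + -d * (B - E)) ≤ a * B := by nlinarith [h]
  exact le_of_mul_le_mul_left h2 ha

end kernelineq

lemma key_ineq {a θ μ : ℝ} (ha : 0 < a) (hμ : 1 ≤ μ) {u : Ω3 → ℝ}
    (hu : AEStronglyMeasurable u (volume : Measure Ω3))
    (hu2 : Integrable (fun x => u x ^ 2)) :
    exp θ * dblInt (Kbp (a * exp θ)) u + ((1 - exp (μ*θ))/μ) * dblInt (Kbp a) u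
      + (-(((1 - exp (μ*θ))/μ) / a)) * dblInt (fun r => exp (-r / a)) u
    ≤ dblInt (Kbp a) u := by
  set c := (1 - exp (μ*θ))/μ with hc
  have haτ : 0 < a * exp θ := by positivity
  have hm₁ : Measurable (fun r => exp θ * Kbp (a * exp θ) r) :=
    (Kbp_measurable _).const_mul _
  have hme : Measurable (fun r : ℝ => exp (-r / a)) := (measurable_id.neg.div_const a).exp
  have hm₂a : Measurable (fun r : ℝ => c * Kbp a r) := (Kbp_measurable a).const_mul c
  have hm₂b : Measurable (fun r : ℝ => (-(c/a)) * exp (-r / a)) := hme.const_mul _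
  have hm₂ : Measurable (fun r => c * Kbp a r + (-(c/a)) * exp (-r / a)) := hm₂a.add hm₂b
  set C₁ : ℝ := exp θ * (a * exp θ)⁻¹ with hC₁
  set C₂ : ℝ := |c| * a⁻¹ + |c| / a * 1 with hC₂
  have hb₁ : ∀ r, 0 ≤ r → |exp θ * Kbp (a * exp θ) r| ≤ C₁ := by
    intro r hr
    rw [abs_mul, abs_exp]
    exact mul_le_mul_of_nonneg_left (Kbp_bound haτ hr) (exp_pos θ).le
  have hb₂ : ∀ r, 0 ≤ r → |c * Kbp a r + (-(c/a)) * exp (-r / a)| ≤ C₂ := by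
    intro r hr
    calc |c * Kbp a r + (-(c/a)) * exp (-r / a)|
        ≤ |c * Kbp a r| + |(-(c/a)) * exp (-r / a)| := abs_add_le _ _
      _ ≤ C₂ := by
          rw [abs_mul, abs_mul, abs_neg,
            show |c/a| = |c|/a from by rw [abs_div, abs_of_pos ha]]
          exact add_le_add
            (mul_le_mul_of_nonneg_left (Kbp_bound ha hr) (abs_nonneg c))
            (mul_le_mul_of_nonneg_left (exp_kernel_bound ha hr) (by positivity))
  have hdec : dblInt (fun r => (fun r => exp θ * Kbp (a * exp θ) r) r
        + (fun r => c * Kbp a r + (-(c/a)) * exp (-r / a)) r) u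
      = exp θ * dblInt (Kbp (a * exp θ)) u
        + (c * dblInt (Kbp a) u + (-(c/a)) * dblInt (fun r => exp (-r / a)) u) := by
    rw [dblInt_add hu hu2 hm₁ hm₂ hb₁ hb₂]
    congr 1
    · exact dblInt_const_mul _ _ u
    · rw [dblInt_add hu hu2 hm₂a hm₂b
        (C₁ := |c| * a⁻¹) (C₂ := |c| / a * 1)
        (fun r hr => by
          rw [abs_mul]
          exact mul_le_mul_of_nonneg_left (Kbp_bound ha hr) (abs_nonneg c))
        (fun r hr => by
          rw [abs_mul, abs_neg,
            show |c/a| = |c|/a from by rw [abs_div, abs_of_pos ha]]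
          exact mul_le_mul_of_nonneg_left (exp_kernel_bound ha hr) (by positivity))]
      congr 1
      · exact dblInt_const_mul _ _ u
      · exact dblInt_const_mul _ _ u
  have hle : ∀ r, 0 < r → (fun r => exp θ * Kbp (a * exp θ) r) r
      + (fun r => c * Kbp a r + (-(c/a)) * exp (-r / a)) r ≤ Kbp a r := by
    intro r hr
    simp only
    have hk := kernel_ineq (θ := θ) (μ := μ) ha hμ hr
    rw [← hc] at hk
    have he : c * Kbp a r + (-(c/a)) * exp (-r / a) = c * (Kbp a r - exp (-r/a) / a) := by
      ring
    rw [he]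
    linarith
  have hmono := dblInt_mono (C := max (C₁ + C₂) a⁻¹) hu hu2 (hm₁.add hm₂) (Kbp_measurable a)
    (fun r hr => by
      refine le_trans ?_ (le_max_left _ _)
      calc |(fun r => exp θ * Kbp (a * exp θ) r) r
            + (fun r => c * Kbp a r + (-(c/a)) * exp (-r / a)) r|
          ≤ |(fun r => exp θ * Kbp (a * exp θ) r) r|
            + |(fun r => c * Kbp a r + (-(c/a)) * exp (-r / a)) r| := abs_add_le _ _
        _ ≤ C₁ + C₂ := add_le_add (hb₁ r hr) (hb₂ r hr))
    (fun r hr => le_trans (Kbp_bound ha hr) (le_max_right _ _)) hle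
  rw [show ((fun r => exp θ * Kbp (a * exp θ) r) + fun r => c * Kbp a r + (-(c/a)) * exp (-r / a)) = fun r => (fun r => exp θ * Kbp (a * exp θ) r) r + (fun r => c * Kbp a r + (-(c/a)) * exp (-r / a)) r from rfl, hdec] at hmono
  linarith





end aux

/-- For all `u ∈ H¹(ℝ³)` and `θ ∈ ℝ`:
`E(u) ≥ E(κ(u,θ)) + (2(1 - e^{3(p-2)θ/2})/(3(p-2)))P(u) + (h₁(θ)/(6(p-2)))‖∇u‖²`,
with `h₁(θ) = 4 e^{3(p-2)θ/2} - 3(p-2)e^{2θ} + 3p - 10`. -/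
theorem energy_scaling_inequality (p a : ℝ) (hp₁ : 10/3 < p) (hp₂ : p < 6) (ha : 0 < a) :
    ∀ (u : Ω3 → ℝ), H1 u → ∀ θ : ℝ,
      Ebp a p (scl θ u) + (2*(1 - exp (3*(p-2)*θ/2))/(3*(p-2))) * Pbp a p u
        + ((4 * exp (3*(p-2)*θ/2) - 3*(p-2) * exp (2*θ) + 3*p - 10)/(6*(p-2))) * gradSq u
      ≤ Ebp a p u := by
  intro u hu θ
  obtain ⟨h2, -⟩ := hu
  have huA : AEStronglyMeasurable u (volume : Measure Ω3) := h2.aestronglyMeasurable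
  have hu2 : Integrable (fun x => u x ^ 2) := h2.integrable_sq
  have hp2 : (0:ℝ) < p - 2 := by linarith
  have hμ : (1:ℝ) ≤ 3*(p-2)/2 := by linarith
  have hD : dblInt (Kbp a) (scl θ u) = exp θ * dblInt (Kbp (a * exp θ)) u := by
    rw [dblInt_scl]
    have hker : (fun r => Kbp a (exp (-θ) * r)) = fun r => exp θ * Kbp (a * exp θ) r := by
      funext r
      unfold Kbp
      rcases eq_or_ne r 0 with h | h
      · simp [h]
      · rw [show -(exp (-θ) * r) / a = -r / (a * exp θ) by
          rw [exp_neg]; field_simp,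
          show exp (-θ) * r = r / exp θ by rw [exp_neg]; ring,
          div_div_eq_mul_div]
        ring
    rw [hker, dblInt_const_mul]
  have hG := gradSq_scl θ u
  have hL := lpInt_scl θ p u
  have key := key_ineq (θ := θ) (μ := 3*(p-2)/2) ha hμ huA hu2
  rw [show (3*(p-2)/2) * θ = 3*(p-2)*θ/2 by ring] at key
  have master : Ebp a p (scl θ u) + (2*(1 - exp (3*(p-2)*θ/2))/(3*(p-2))) * Pbp a p u
      + ((4 * exp (3*(p-2)*θ/2) - 3*(p-2) * exp (2*θ) + 3*p - 10)/(6*(p-2))) * gradSq u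
      - Ebp a p u
    = (1/4) * ((exp θ * dblInt (Kbp (a * exp θ)) u
        + ((1 - exp (3*(p-2)*θ/2))/(3*(p-2)/2)) * dblInt (Kbp a) u
        + (-(((1 - exp (3*(p-2)*θ/2))/(3*(p-2)/2)) / a)) * dblInt (fun r => exp (-r / a)) u)
      - dblInt (Kbp a) u) := by
    unfold Ebp Pbp
    rw [hG, hD, hL]
    have hpne : p ≠ 0 := by linarith
    have hp2ne : p - 2 ≠ 0 := hp2.ne'
    have hane : a ≠ 0 := ha.ne'
    field_simp
    ring
  linarith [key, master]
end
end
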